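/- If G is a finite-by-nilpotent group, then ν(G) is nilpotent-by-finite. -/

import Mathlib

open Monoid Subgroup
open scoped commutatorElement

/-- The relators of the presentation of ν(G): for all g, h, k ∈ G,
`[g,hφ]^k = [g^k,(h^k)φ]` and `[g,hφ]^(kφ) = [g^k,(h^k)φ]` (exponents denote conjugation). -/
def nuRels (G : Type*) [Group G] : Set (Monoid.Coprod G G) :=
  { r | ∃ g h k : G,
      r = ((Coprod.inl k)⁻¹ * ⁅(Coprod.inl g : Coprod G G), Coprod.inr h⁆ * Coprod.inl k) *
          (⁅(Coprod.inl (k⁻¹ * g * k) : Coprod G G), Coprod.inr (k⁻¹ * h * k)⁆)⁻¹ ∨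
      r = ((Coprod.inr k)⁻¹ * ⁅(Coprod.inl g : Coprod G G), Coprod.inr h⁆ * Coprod.inr k) *
          (⁅(Coprod.inl (k⁻¹ * g * k) : Coprod G G), Coprod.inr (k⁻¹ * h * k)⁆)⁻¹ }

/-- The group ν(G): the quotient of the free product G * Gφ by the defining relations. -/
def Nu (G : Type*) [Group G] := Coprod G G ⧸ Subgroup.normalClosure (nuRels G)

instance (G : Type*) [Group G] : Group (Nu G) := QuotientGroup.Quotient.group _

/-- The canonical map G → ν(G) (the copy `G`). -/
def nuL (G : Type*) [Group G] : G →* Nu G := (QuotientGroup.mk' _).comp Coprod.inl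

/-- The canonical map G → ν(G) (the copy `Gφ`). -/
def nuR (G : Type*) [Group G] : G →* Nu G := (QuotientGroup.mk' _).comp Coprod.inr


namespace NuProof

variable {G : Type*} [Group G]

local notation "ι" => nuL G
local notation "ιφ" => nuR G

/-- the diagonal map ρ : ν(G) → G -/
def rho : Nu G →* G :=
  QuotientGroup.lift _ (Coprod.lift (MonoidHom.id G) (MonoidHom.id G)) (by
    intro x hx
    refine Subgroup.normalClosure_le_normal ?_ hx
    rintro r ⟨g, h, k, (rfl | rfl)⟩ <;>
      simp [MonoidHom.mem_ker, commutatorElement_def, map_mul, map_inv] <;> group)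

/-- the map π : ν(G) → G × G -/
def pi : Nu G →* G × G :=
  QuotientGroup.lift _ (Coprod.lift (MonoidHom.inl G G) (MonoidHom.inr G G)) (by
    intro x hx
    refine Subgroup.normalClosure_le_normal ?_ hx
    rintro r ⟨g, h, k, (rfl | rfl)⟩ <;>
      · simp only [MonoidHom.mem_ker, map_mul, map_inv, commutatorElement_def,
          Coprod.lift_apply_inl, Coprod.lift_apply_inr]
        ext <;> simp <;> group)

@[simp] lemma rho_nuL (g : G) : rho (nuL G g) = g := rfl
@[simp] lemma rho_nuR (g : G) : rho (nuR G g) = g := rfl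
@[simp] lemma pi_nuL (g : G) : pi (nuL G g) = (g, 1) := rfl
@[simp] lemma pi_nuR (g : G) : pi (nuR G g) = (1, g) := rfl

lemma relL (g h k : G) :
    (ι k)⁻¹ * ⁅ι g, ιφ h⁆ * ι k = ⁅ι (k⁻¹ * g * k), ιφ (k⁻¹ * h * k)⁆ := by
  have hmem : ((Coprod.inl k)⁻¹ * ⁅(Coprod.inl g : Coprod G G), Coprod.inr h⁆ * Coprod.inl k) *
      (⁅(Coprod.inl (k⁻¹ * g * k) : Coprod G G), Coprod.inr (k⁻¹ * h * k)⁆)⁻¹ ∈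
      Subgroup.normalClosure (nuRels G) :=
    Subgroup.subset_normalClosure ⟨g, h, k, Or.inl rfl⟩
  have h1 : (QuotientGroup.mk' (Subgroup.normalClosure (nuRels G)))
      (((Coprod.inl k)⁻¹ * ⁅(Coprod.inl g : Coprod G G), Coprod.inr h⁆ * Coprod.inl k) *
      (⁅(Coprod.inl (k⁻¹ * g * k) : Coprod G G), Coprod.inr (k⁻¹ * h * k)⁆)⁻¹) = 1 := by
    rwa [← MonoidHom.mem_ker, QuotientGroup.ker_mk']
  rw [map_mul, map_inv] at h1
  have := mul_eq_one_iff_eq_inv.mp h1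
  rw [inv_inv] at this
  rw [map_mul, map_mul, map_inv, map_commutatorElement, map_commutatorElement] at this
  exact this

lemma relR (g h k : G) :
    (ιφ k)⁻¹ * ⁅ι g, ιφ h⁆ * ιφ k = ⁅ι (k⁻¹ * g * k), ιφ (k⁻¹ * h * k)⁆ := by
  have hmem : ((Coprod.inr k)⁻¹ * ⁅(Coprod.inl g : Coprod G G), Coprod.inr h⁆ * Coprod.inr k) *
      (⁅(Coprod.inl (k⁻¹ * g * k) : Coprod G G), Coprod.inr (k⁻¹ * h * k)⁆)⁻¹ ∈
      Subgroup.normalClosure (nuRels G) :=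
    Subgroup.subset_normalClosure ⟨g, h, k, Or.inr rfl⟩
  have h1 : (QuotientGroup.mk' (Subgroup.normalClosure (nuRels G)))
      (((Coprod.inr k)⁻¹ * ⁅(Coprod.inl g : Coprod G G), Coprod.inr h⁆ * Coprod.inr k) *
      (⁅(Coprod.inl (k⁻¹ * g * k) : Coprod G G), Coprod.inr (k⁻¹ * h * k)⁆)⁻¹) = 1 := by
    rwa [← MonoidHom.mem_ker, QuotientGroup.ker_mk']
  rw [map_mul, map_inv] at h1
  have := mul_eq_one_iff_eq_inv.mp h1
  rw [inv_inv] at this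
  rw [map_mul, map_mul, map_inv, map_commutatorElement, map_commutatorElement] at this
  exact this

/-- left-conjugation form -/
lemma conjL (x g h : G) :
    (ι x) * ⁅ι g, ιφ h⁆ * (ι x)⁻¹ = ⁅ι (x * g * x⁻¹), ιφ (x * h * x⁻¹)⁆ := by
  have := relL g h x⁻¹
  simp only [map_inv, inv_inv] at this
  rw [← this]

lemma conjR (x g h : G) :
    (ιφ x) * ⁅ι g, ιφ h⁆ * (ιφ x)⁻¹ = ⁅ι (x * g * x⁻¹), ιφ (x * h * x⁻¹)⁆ := by
  have := relR g h x⁻¹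
  simp only [map_inv, inv_inv] at this
  rw [← this]

/-- the set of "tensor" generators -/
def tset (G : Type*) [Group G] : Set (Nu G) := {x | ∃ g h : G, x = ⁅nuL G g, nuR G h⁆}

/-- the subgroup D = [G, Gφ] of ν(G) -/
def DD (G : Type*) [Group G] : Subgroup (Nu G) := Subgroup.closure (tset G)

lemma tset_conjL {d : Nu G} (hd : d ∈ tset G) (x : G) : (ι x) * d * (ι x)⁻¹ ∈ tset G := by
  obtain ⟨g, h, rfl⟩ := hd
  exact ⟨x * g * x⁻¹, x * h * x⁻¹, (conjL x g h)⟩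

lemma tset_conjR {d : Nu G} (hd : d ∈ tset G) (x : G) : (ιφ x) * d * (ιφ x)⁻¹ ∈ tset G := by
  obtain ⟨g, h, rfl⟩ := hd
  exact ⟨x * g * x⁻¹, x * h * x⁻¹, (conjR x g h)⟩

lemma DD_conjL {d : Nu G} (hd : d ∈ DD G) (x : G) : (ι x) * d * (ι x)⁻¹ ∈ DD G := by
  induction hd using Subgroup.closure_induction with
  | mem y hy => exact Subgroup.subset_closure (tset_conjL hy x)
  | one => simpa using Subgroup.one_mem _
  | mul a b _ _ ha hb =>
      have : (ι x) * (a * b) * (ι x)⁻¹ = ((ι x) * a * (ι x)⁻¹) * ((ι x) * b * (ι x)⁻¹) := by group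
      rw [this]; exact Subgroup.mul_mem _ ha hb
  | inv a _ ha =>
      have : (ι x) * a⁻¹ * (ι x)⁻¹ = ((ι x) * a * (ι x)⁻¹)⁻¹ := by group
      rw [this]; exact Subgroup.inv_mem _ ha

lemma DD_conjR {d : Nu G} (hd : d ∈ DD G) (x : G) : (ιφ x) * d * (ιφ x)⁻¹ ∈ DD G := by
  induction hd using Subgroup.closure_induction with
  | mem y hy => exact Subgroup.subset_closure (tset_conjR hy x)
  | one => simpa using Subgroup.one_mem _
  | mul a b _ _ ha hb =>
      have : (ιφ x) * (a * b) * (ιφ x)⁻¹ = ((ιφ x) * a * (ιφ x)⁻¹) * ((ιφ x) * b * (ιφ x)⁻¹) := by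
        group
      rw [this]; exact Subgroup.mul_mem _ ha hb
  | inv a _ ha =>
      have : (ιφ x) * a⁻¹ * (ιφ x)⁻¹ = ((ιφ x) * a * (ιφ x)⁻¹)⁻¹ := by group
      rw [this]; exact Subgroup.inv_mem _ ha

/-- conjugation by `ιφ x` and by `ι x` agree on D -/
lemma conjR_eq_conjL {d : Nu G} (hd : d ∈ DD G) (x : G) :
    (ιφ x) * d * (ιφ x)⁻¹ = (ι x) * d * (ι x)⁻¹ := by
  induction hd using Subgroup.closure_induction with
  | mem y hy => obtain ⟨g, h, rfl⟩ := hy; rw [conjL, conjR]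
  | one => simp
  | mul a b _ _ ha hb =>
      have e1 : (ιφ x) * (a * b) * (ιφ x)⁻¹ = ((ιφ x) * a * (ιφ x)⁻¹) * ((ιφ x) * b * (ιφ x)⁻¹) := by
        group
      have e2 : (ι x) * (a * b) * (ι x)⁻¹ = ((ι x) * a * (ι x)⁻¹) * ((ι x) * b * (ι x)⁻¹) := by
        group
      rw [e1, e2, ha, hb]
  | inv a _ ha =>
      have e1 : (ιφ x) * a⁻¹ * (ιφ x)⁻¹ = ((ιφ x) * a * (ιφ x)⁻¹)⁻¹ := by group
      have e2 : (ι x) * a⁻¹ * (ι x)⁻¹ = ((ι x) * a * (ι x)⁻¹)⁻¹ := by group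
      rw [e1, e2, ha]

/-- the projection map onto ν(G), with the right codomain -/
def mku : Coprod G G →* Nu G := QuotientGroup.mk' (Subgroup.normalClosure (nuRels G))

lemma mku_surjective : Function.Surjective (mku (G := G)) :=
  QuotientGroup.mk'_surjective _

@[simp] lemma mku_inl (g : G) : mku (Coprod.inl g) = ι g := rfl
@[simp] lemma mku_inr (g : G) : mku (Coprod.inr g) = ιφ g := rfl

/-- I7 : conjugation of an element of D by any w equals conjugation by ι (ρ w). -/
theorem conj_eq_rho (w : Nu G) {d : Nu G} (hd : d ∈ DD G) :
    w * d * w⁻¹ = (ι (rho w)) * d * (ι (rho w))⁻¹ := by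
  obtain ⟨q, rfl⟩ := mku_surjective w
  revert d
  induction q using Coprod.induction_on' with
  | one => intro d _; simp
  | inl_mul m x ih =>
      intro d hd
      rw [map_mul, mku_inl]
      set y : Nu G := mku x with hy
      have e : ι m * y * d * (ι m * y)⁻¹ = ι m * (y * d * y⁻¹) * (ι m)⁻¹ := by group
      rw [e, ih hd]
      have e2 : ι m * (ι (rho y) * d * (ι (rho y))⁻¹) * (ι m)⁻¹
          = (ι (m * rho y)) * d * (ι (m * rho y))⁻¹ := by
        rw [map_mul]; group
      rw [e2, map_mul, map_mul, rho_nuL, ← map_mul]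
  | inr_mul m x ih =>
      intro d hd
      rw [map_mul, mku_inr]
      set y : Nu G := mku x with hy
      have e : ιφ m * y * d * (ιφ m * y)⁻¹ = ιφ m * (y * d * y⁻¹) * (ιφ m)⁻¹ := by group
      rw [e, ih hd]
      have hmem : (ι (rho y)) * d * (ι (rho y))⁻¹ ∈ DD G := DD_conjL hd _
      rw [conjR_eq_conjL hmem m]
      have e2 : ι m * (ι (rho y) * d * (ι (rho y))⁻¹) * (ι m)⁻¹
          = (ι (m * rho y)) * d * (ι (m * rho y))⁻¹ := by
        rw [map_mul]; group
      rw [e2, map_mul, map_mul, rho_nuR, ← map_mul]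

instance : (DD G).Normal := by
  constructor
  intro n hn g
  have := conj_eq_rho g hn
  rw [this]
  exact DD_conjL hn _

lemma tensor_mem_DD (g h : G) : ⁅ι g, ιφ h⁆ ∈ DD G := Subgroup.subset_closure ⟨g, h, rfl⟩

lemma pi_tensor (g h : G) : pi ⁅ι g, ιφ h⁆ = 1 := by
  rw [map_commutatorElement]
  simp only [pi_nuL, pi_nuR]
  ext <;> simp [commutatorElement_def]

lemma DD_le_ker_pi : DD G ≤ (pi (G := G)).ker := by
  rw [DD, Subgroup.closure_le]
  rintro x ⟨g, h, rfl⟩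
  exact pi_tensor g h

lemma ker_pi_eq_DD : (pi (G := G)).ker = DD G := by
  refine le_antisymm ?_ DD_le_ker_pi
  set q : Nu G →* Nu G ⧸ DD G := QuotientGroup.mk' (DD G) with hq
  have comm : ∀ (g h : G), Commute (q (ι g)) (q (ιφ h)) := by
    intro g h
    have h1 : q ⁅ι g, ιφ h⁆ = 1 := by
      rw [← MonoidHom.mem_ker, QuotientGroup.ker_mk']
      exact tensor_mem_DD g h
    rw [map_commutatorElement] at h1
    exact commutatorElement_eq_one_iff_commute.mp h1
  set σ : G × G →* Nu G ⧸ DD G :=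
    MonoidHom.noncommCoprod (q.comp (nuL G)) (q.comp (nuR G)) (fun g h => comm g h) with hσ
  have key : σ.comp (pi (G := G)) = q := by
    have : (σ.comp (pi (G := G))).comp (mku (G := G)) = q.comp (mku (G := G)) := by
      apply Coprod.hom_ext <;> ext x
      · show q (ι x) * q (ιφ (1 : G)) = q (ι x)
        simp
      · show q (ι (1 : G)) * q (ιφ x) = q (ιφ x)
        simp
    ext w
    obtain ⟨u, rfl⟩ := mku_surjective w
    exact DFunLike.congr_fun this u
  intro x hx
  have : q x = 1 := by
    rw [← key]
    simp only [MonoidHom.comp_apply]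
    rw [MonoidHom.mem_ker] at hx
    rw [hx, map_one]
  rwa [hq, ← MonoidHom.mem_ker, QuotientGroup.ker_mk'] at this

section Main

variable (k : ℕ) (H : Subgroup G) [H.Normal]

/-- the weight chain in G -/
def VV (j : ℕ) : Subgroup G :=
  if j ≤ 1 then ⊤ else H ⊓ (⊤ : Subgroup G).lowerCentralSeries (j - 2)

omit [H.Normal] in lemma VV_one : VV (G := G) H 1 = ⊤ := by simp [VV]

omit [H.Normal] in lemma VV_le_H {j : ℕ} (hj : 2 ≤ j) : VV H j ≤ H := by
  rw [VV, if_neg (by omega)]; exact inf_le_left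

omit [H.Normal] in lemma VV_le_lcs {j : ℕ} (hj : 2 ≤ j) : VV H j ≤ (⊤ : Subgroup G).lowerCentralSeries (j - 2) := by
  rw [VV, if_neg (by omega)]; exact inf_le_right

omit [H.Normal] in
lemma VV_antitone : Antitone (VV H) := by
  intro a b hab
  by_cases ha : a ≤ 1
  · simp only [VV]
    rw [if_pos ha]
    exact le_top
  · have hb : ¬ b ≤ 1 := by omega
    rw [VV, VV, if_neg ha, if_neg hb]
    exact inf_le_inf le_rfl (Subgroup.lowerCentralSeries_antitone ⊤ (by omega))

omit [H.Normal] in lemma mem_VV_of_le {a b : ℕ} (hab : b ≤ a) {x : G} (hx : x ∈ VV H a) : x ∈ VV H b :=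
  VV_antitone H hab hx

/-- commutator weight raise: if `z ∈ V m`, `m ≥ 2`, and `u` arbitrary then `⁅z,u⁆ ∈ V (m+1)` -/
lemma comm_VV_raise {m : ℕ} (hm : 2 ≤ m) {z u : G} (hz : z ∈ VV H m) :
    ⁅z, u⁆ ∈ VV H (m + 1) := by
  rw [VV, if_neg (by omega)]
  constructor
  · have hzH : z ∈ H := VV_le_H H hm hz
    have : ⁅z, u⁆ = z * (u * z⁻¹ * u⁻¹) := by group
    rw [this]
    exact H.mul_mem hzH (Subgroup.Normal.conj_mem ‹H.Normal› _ (H.inv_mem hzH) u)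
  · have hz2 : z ∈ (⊤ : Subgroup G).lowerCentralSeries (m - 2) := VV_le_lcs H hm hz
    have : m + 1 - 2 = (m - 2) + 1 := by omega
    rw [this, Subgroup.lowerCentralSeries_succ]
    exact Subgroup.commutator_mem_commutator hz2 (Subgroup.mem_top u)

/-- symmetric version : `⁅z,u⁆ ∈ V (i+1)` if `u ∈ V i`, `i ≥ 2`. -/
lemma comm_VV_raise' {i : ℕ} (hi : 2 ≤ i) {z u : G} (hu : u ∈ VV H i) :
    ⁅z, u⁆ ∈ VV H (i + 1) := by
  have h1 := comm_VV_raise H hi (u := z) hu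
  have h2 : ⁅z, u⁆ = ⁅u, z⁆⁻¹ := (commutatorElement_inv u z).symm
  rw [h2]
  exact (VV H (i+1)).inv_mem h1

/-- commutator of an `H`-element with anything lands in `V 3`. -/
lemma comm_H_mem_V3 {z u : G} (hz : z ∈ H) : ⁅z, u⁆ ∈ VV H 3 := by
  rw [VV, if_neg (by omega)]
  constructor
  · have : ⁅z, u⁆ = z * (u * z⁻¹ * u⁻¹) := by group
    rw [this]
    exact H.mul_mem hz (Subgroup.Normal.conj_mem ‹H.Normal› _ (H.inv_mem hz) u)
  · show ⁅z, u⁆ ∈ (⊤ : Subgroup G).lowerCentralSeries 1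
    rw [Subgroup.lowerCentralSeries_succ]
    exact Subgroup.commutator_mem_commutator (by trivial) (Subgroup.mem_top u)

lemma comm_H_mem_V3' {z u : G} (hu : u ∈ H) : ⁅z, u⁆ ∈ VV H 3 := by
  have h2 : ⁅z, u⁆ = ⁅u, z⁆⁻¹ := (commutatorElement_inv u z).symm
  rw [h2]
  exact (VV H 3).inv_mem (comm_H_mem_V3 H hu)

instance VV_normal (j : ℕ) : (VV H j).Normal := by
  rw [VV]
  split
  · infer_instance
  · infer_instance

/-- generators of the weight filtration of D -/
def fgen (s : ℕ) : Set (Nu G) :=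
  {x | ∃ i j u v, u ∈ VV H i ∧ v ∈ VV H j ∧ s ≤ min i (k+2) + min j (k+2) ∧
    x = ⁅nuL G u, nuR G v⁆}

/-- the weight filtration of D -/
def FF (s : ℕ) : Subgroup (Nu G) := Subgroup.closure (fgen k H s)

lemma tensor_mem_FF {s i j : ℕ} {u v : G} (hu : u ∈ VV H i) (hv : v ∈ VV H j)
    (hs : s ≤ min i (k+2) + min j (k+2)) : ⁅ι u, ιφ v⁆ ∈ FF k H s :=
  Subgroup.subset_closure ⟨i, j, u, v, hu, hv, hs, rfl⟩

omit [H.Normal] in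
lemma fgen_mono {s s' : ℕ} (h : s' ≤ s) : fgen k H s ⊆ fgen k H s' := by
  rintro x ⟨i, j, u, v, hu, hv, hs, rfl⟩
  exact ⟨i, j, u, v, hu, hv, le_trans h hs, rfl⟩

omit [H.Normal] in
lemma FF_antitone {s s' : ℕ} (h : s' ≤ s) : FF k H s ≤ FF k H s' :=
  Subgroup.closure_mono (fgen_mono k H h)

omit [H.Normal] in
lemma FF_le_DD (s : ℕ) : FF k H s ≤ DD G := by
  apply Subgroup.closure_le (DD G) |>.mpr
  rintro x ⟨i, j, u, v, _, _, _, rfl⟩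
  exact tensor_mem_DD u v

lemma DD_eq_FF2 : DD G = FF k H 2 := by
  refine le_antisymm ?_ (FF_le_DD k H 2)
  apply Subgroup.closure_le (FF k H 2) |>.mpr
  rintro x ⟨g, h, rfl⟩
  refine tensor_mem_FF k H (i := 1) (j := 1) ?_ ?_ (by omega)
  · rw [VV_one]; trivial
  · rw [VV_one]; trivial

lemma fgen_conjL {x : Nu G} (hx : x ∈ fgen k H s) (w : G) :
    (ι w) * x * (ι w)⁻¹ ∈ fgen k H s := by
  obtain ⟨i, j, u, v, hu, hv, hs, rfl⟩ := hx
  exact ⟨i, j, w * u * w⁻¹, w * v * w⁻¹,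
    (VV_normal H i).conj_mem u hu w, (VV_normal H j).conj_mem v hv w, hs, (conjL w u v)⟩

lemma FF_conjL {s : ℕ} {x : Nu G} (hx : x ∈ FF k H s) (w : G) :
    (ι w) * x * (ι w)⁻¹ ∈ FF k H s := by
  induction hx using Subgroup.closure_induction with
  | mem y hy => exact Subgroup.subset_closure (fgen_conjL k H hy w)
  | one => simpa using Subgroup.one_mem _
  | mul a b _ _ ha hb =>
      have : (ι w) * (a * b) * (ι w)⁻¹ = ((ι w) * a * (ι w)⁻¹) * ((ι w) * b * (ι w)⁻¹) := by group
      rw [this]; exact Subgroup.mul_mem _ ha hb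
  | inv a _ ha =>
      have : (ι w) * a⁻¹ * (ι w)⁻¹ = ((ι w) * a * (ι w)⁻¹)⁻¹ := by group
      rw [this]; exact Subgroup.inv_mem _ ha

instance FF_normal (s : ℕ) : (FF k H s).Normal := by
  constructor
  intro n hn g
  rw [conj_eq_rho g (FF_le_DD k H s hn)]
  exact FF_conjL k H hn _

end Main

/-- commutator with a normal-subgroup element on the left stays in the subgroup -/
lemma comm_mem_left {K : Subgroup (Nu G)} [K.Normal] {e : Nu G} (he : e ∈ K) (w : Nu G) :
    ⁅e, w⁆ ∈ K := by
  have : ⁅e, w⁆ = e * (w * e⁻¹ * w⁻¹) := by group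
  rw [this]
  exact K.mul_mem he (Subgroup.Normal.conj_mem ‹K.Normal› _ (K.inv_mem he) w)

lemma comm_mem_right {K : Subgroup (Nu G)} [K.Normal] {e : Nu G} (he : e ∈ K) (w : Nu G) :
    ⁅w, e⁆ ∈ K := by
  have : ⁅w, e⁆ = ⁅e, w⁆⁻¹ := (commutatorElement_inv e w).symm
  rw [this]
  exact K.inv_mem (comm_mem_left he w)

section Identities
variable {K : Type*} [Group K]

lemma comm_eq_mul_inv_conj (a b : K) : ⁅a, b⁆ = a * (b * a * b⁻¹)⁻¹ := by
  simp only [commutatorElement_def]; group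

lemma comm_mul_right (a b c : K) : ⁅a, b * c⁆ = ⁅a, b⁆ * (b * ⁅a, c⁆ * b⁻¹) := by
  simp only [commutatorElement_def]; group

lemma comm_inv_left_mul (a b c : K) : ⁅a, b⁻¹ * c⁆ = b⁻¹ * (⁅a, b⁆⁻¹ * ⁅a, c⁆) * b := by
  simp only [commutatorElement_def]; group

lemma exp_identity (a b c e : K) :
    ⁅a * b, c * e⁆ =
      (a * ⁅b, c⁆ * a⁻¹) * ((a * c) * ⁅b, e⁆ * (a * c)⁻¹) * ⁅a, c⁆ * (c * ⁅a, e⁆ * c⁻¹) := by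
  simp only [commutatorElement_def]; group

end Identities

section Claims

variable (k : ℕ) (H : Subgroup G) [H.Normal]

/-- Hall–Witt case : first entry has weight 1. -/
lemma theta_i1 {j m : ℕ} (hm : 2 ≤ m) (u : G) {v z : G}
    (hv : v ∈ VV H j) (hz : z ∈ VV H m) :
    ⁅⁅ι u, ιφ v⁆, ι z⁆ ∈ FF k H (min j (k+2) + 2) := by
  set F := FF k H (min j (k+2) + 2)
  -- Hall–Witt identity
  have hw : ∀ x y c : Nu G,
      (y⁻¹ * ⁅⁅y, x⁻¹⁆, c⁻¹⁆ * y) * (c⁻¹ * ⁅⁅c, y⁻¹⁆, x⁻¹⁆ * c) *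
        (x⁻¹ * ⁅⁅x, c⁻¹⁆, y⁻¹⁆ * x) = 1 := by
    intro x y c
    simp only [commutatorElement_def]; group
  have key := hw (ι (z⁻¹)) (ιφ (v⁻¹)) (ι u)
  -- name the three terms
  set A := (ιφ (v⁻¹))⁻¹ * ⁅⁅ιφ (v⁻¹), (ι (z⁻¹))⁻¹⁆, (ι u)⁻¹⁆ * ιφ (v⁻¹) with hA
  set B := (ι (z⁻¹))⁻¹ * ⁅⁅ι (z⁻¹), (ι u)⁻¹⁆, (ιφ (v⁻¹))⁻¹⁆ * ι (z⁻¹) with hB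
  have key2 : A * ((ι u)⁻¹ * ⁅⁅ι u, (ιφ (v⁻¹))⁻¹⁆, (ι (z⁻¹))⁻¹⁆ * ι u) * B = 1 := key
  have hXform : ⁅⁅ι u, (ιφ (v⁻¹))⁻¹⁆, (ι (z⁻¹))⁻¹⁆ = ⁅⁅ι u, ιφ v⁆, ι z⁆ := by
    rw [map_inv, map_inv, inv_inv, inv_inv]
  rw [hXform] at key2
  have hX : ⁅⁅ι u, ιφ v⁆, ι z⁆ = (ι u) * A⁻¹ * B⁻¹ * (ι u)⁻¹ := by
    have h1 : (ι u)⁻¹ * ⁅⁅ι u, ιφ v⁆, ι z⁆ * ι u = A⁻¹ * B⁻¹ := by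
      have := key2
      -- solve A * Y * B = 1  =>  Y = A⁻¹ * B⁻¹
      have h2 : A * ((ι u)⁻¹ * ⁅⁅ι u, ιφ v⁆, ι z⁆ * ι u) = B⁻¹ :=
        eq_inv_of_mul_eq_one_left this
      calc (ι u)⁻¹ * ⁅⁅ι u, ιφ v⁆, ι z⁆ * ι u
          = A⁻¹ * (A * ((ι u)⁻¹ * ⁅⁅ι u, ιφ v⁆, ι z⁆ * ι u)) := by group
        _ = A⁻¹ * B⁻¹ := by rw [h2]
    calc ⁅⁅ι u, ιφ v⁆, ι z⁆
        = (ι u) * ((ι u)⁻¹ * ⁅⁅ι u, ιφ v⁆, ι z⁆ * ι u) * (ι u)⁻¹ := by group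
      _ = (ι u) * (A⁻¹ * B⁻¹) * (ι u)⁻¹ := by rw [h1]
      _ = (ι u) * A⁻¹ * B⁻¹ * (ι u)⁻¹ := by group
  rw [hX]
  have hmem_A : A ∈ F := by
    have hE1 : ⁅ιφ (v⁻¹), (ι (z⁻¹))⁻¹⁆ ∈ F := by
      have e1 : ⁅ιφ (v⁻¹), (ι (z⁻¹))⁻¹⁆ = ⁅(ι (z⁻¹))⁻¹, ιφ (v⁻¹)⁆⁻¹ :=
        (commutatorElement_inv _ _).symm
      rw [e1]
      apply F.inv_mem
      have e2 : (ι (z⁻¹))⁻¹ = ι z := by rw [map_inv, inv_inv]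
      rw [e2]
      refine FF_antitone k H ?_ (tensor_mem_FF k H (i := m) (j := j)
        hz ((VV H j).inv_mem hv) le_rfl)
      have : 2 ≤ min m (k+2) := le_min hm (by omega)
      omega
    have : ⁅⁅ιφ (v⁻¹), (ι (z⁻¹))⁻¹⁆, (ι u)⁻¹⁆ ∈ F := comm_mem_left hE1 _
    rw [hA]
    have := Subgroup.Normal.conj_mem (FF_normal k H _) _ this ((ιφ (v⁻¹))⁻¹)
    simpa [mul_assoc] using this
  have hmem_B : B ∈ F := by
    have hE2 : ⁅⁅ι (z⁻¹), (ι u)⁻¹⁆, (ιφ (v⁻¹))⁻¹⁆ ∈ F := by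
      have e1 : ⁅ι (z⁻¹), (ι u)⁻¹⁆ = ι ⁅z⁻¹, u⁻¹⁆ := by
        rw [← map_inv]; exact (map_commutatorElement _ _ _).symm
      have e2 : (ιφ (v⁻¹))⁻¹ = ιφ v := by rw [map_inv, inv_inv]
      rw [e1, e2]
      have hw' : ⁅z⁻¹, u⁻¹⁆ ∈ VV H (m+1) :=
        comm_VV_raise H hm ((VV H m).inv_mem hz)
      refine FF_antitone k H ?_ (tensor_mem_FF k H (i := m+1) (j := j) hw' hv le_rfl)
      have : 2 ≤ min (m+1) (k+2) := le_min (by omega) (by omega)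
      omega
    rw [hB]
    have := Subgroup.Normal.conj_mem (FF_normal k H _) _ hE2 ((ι (z⁻¹))⁻¹)
    simpa [mul_assoc] using this
  have : (ι u) * A⁻¹ * B⁻¹ * (ι u)⁻¹ = (ι u) * (A⁻¹ * B⁻¹) * (ι u)⁻¹ := by group
  rw [this]
  exact Subgroup.Normal.conj_mem (FF_normal k H _) _ (F.mul_mem (F.inv_mem hmem_A) (F.inv_mem hmem_B)) (ι u)

omit [H.Normal] in
lemma VV_le_lcs_k {m : ℕ} (hm : k + 2 ≤ m) : VV H m ≤ (⊤ : Subgroup G).lowerCentralSeries k :=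
  le_trans (VV_le_lcs H (by omega)) (Subgroup.lowerCentralSeries_antitone ⊤ (by omega))

section Freeze

variable (hfz : ∀ h ∈ H, ∀ t ∈ (⊤ : Subgroup G).lowerCentralSeries k, h * t * h⁻¹ = t)

include hfz

omit [H.Normal] in
lemma freeze_commute {a b : G} (ha : a ∈ H) (hb : b ∈ (⊤ : Subgroup G).lowerCentralSeries k) :
    Commute a b := by
  have h1 := hfz a ha b hb
  rw [commute_iff_eq]
  calc a * b = (a * b * a⁻¹) * a := by group
  _ = b * a := by rw [h1]

omit [H.Normal] in
lemma freeze_conj1 {a b : G} (ha : a ∈ H) (hb : b ∈ (⊤ : Subgroup G).lowerCentralSeries k) :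
    b * a * b⁻¹ = a := by
  have h1 : b * a = a * b := (freeze_commute k H hfz ha hb).symm
  rw [h1]; group

omit [H.Normal] in
lemma freeze_conj2 {a b : G} (ha : a ∈ H) (hb : b ∈ (⊤ : Subgroup G).lowerCentralSeries k) :
    a * b * a⁻¹ = b := hfz a ha b hb

omit [H.Normal] in
lemma freeze_comm_eq_one {a b : G} (ha : a ∈ H) (hb : b ∈ (⊤ : Subgroup G).lowerCentralSeries k) :
    ⁅b, a⁆ = 1 :=
  commutatorElement_eq_one_iff_commute.mpr ((freeze_commute k H hfz ha hb).symm)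

omit [H.Normal] in
lemma freeze_comm_eq_one' {a b : G} (ha : a ∈ H) (hb : b ∈ (⊤ : Subgroup G).lowerCentralSeries k) :
    ⁅a, b⁆ = 1 :=
  commutatorElement_eq_one_iff_commute.mpr (freeze_commute k H hfz ha hb)

end Freeze

section Psi

variable (hfz : ∀ h ∈ H, ∀ t ∈ (⊤ : Subgroup G).lowerCentralSeries k, h * t * h⁻¹ = t)

/-- conjugation by `ι z` and `ιφ z` give the same commutator with elements of D -/
lemma commD_iotaR_eq_iotaL {d : Nu G} (hd : d ∈ DD G) (z : G) :
    ⁅d, ιφ z⁆ = ⁅d, ι z⁆ := by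
  rw [comm_eq_mul_inv_conj, comm_eq_mul_inv_conj, conjR_eq_conjL hd]

include hfz in
/-- the ψ-trick: frozen-zone commutators for generators with a weight-1 second entry. -/
lemma theta_psi {i : ℕ} (hi : 2 ≤ i) {u : G} (g : G) (hu : u ∈ VV H i) :
    ∀ z ∈ VV H (k+2), ⁅⁅ι u, ιφ g⁆, ι z⁆ ∈ FF k H (min i (k+2) + 2) := by
  set F := FF k H (min i (k+2) + 2) with hF
  set d := ⁅ι u, ιφ g⁆ with hd
  set q := QuotientGroup.mk' F with hq
  have huH : u ∈ H := VV_le_H H hi hu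
  -- Step 1: the relation
  have rel : ∀ z ∈ VV H (k+2), q ⁅d, ι z⁆ = q ⁅d, ι ⁅z, g⁆⁆ := by
    intro z hz
    have hzT : z ∈ (⊤ : Subgroup G).lowerCentralSeries k := VV_le_lcs_k k H le_rfl hz
    have hw' : ⁅z, g⁆ ∈ VV H (k+3) := comm_VV_raise H (by omega) hz
    have hp : ⁅ι u, ιφ ⁅z, g⁆⁆ ∈ F := by
      refine tensor_mem_FF k H (i := i) (j := k+3) hu hw' ?_
      have h1 : min (k+3) (k+2) = k + 2 := by omega
      omega
    have hconj : ι z * d * (ι z)⁻¹ =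
        ⁅ι u, ιφ ⁅z, g⁆⁆ * (ιφ ⁅z, g⁆ * d * (ιφ ⁅z, g⁆)⁻¹) := by
      rw [hd, conjL]
      have h1 : z * u * z⁻¹ = u := freeze_conj1 k H hfz huH hzT
      have h2 : z * g * z⁻¹ = ⁅z, g⁆ * g := by simp only [commutatorElement_def]; group
      rw [h1, h2, map_mul, comm_mul_right]
    have e1 : q (ι z * d * (ι z)⁻¹) = q (ιφ ⁅z, g⁆) * q d * (q (ιφ ⁅z, g⁆))⁻¹ := by
      rw [hconj, map_mul, map_mul, map_mul, map_inv]
      have : q ⁅ι u, ιφ ⁅z, g⁆⁆ = 1 := (QuotientGroup.eq_one_iff _).mpr hp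
      rw [this, one_mul]
    calc q ⁅d, ι z⁆ = q d * (q (ι z * d * (ι z)⁻¹))⁻¹ := by
          rw [comm_eq_mul_inv_conj, map_mul, map_inv]
      _ = q d * (q (ιφ ⁅z, g⁆) * q d * (q (ιφ ⁅z, g⁆))⁻¹)⁻¹ := by rw [e1]
      _ = q (d * (ιφ ⁅z, g⁆ * d * (ιφ ⁅z, g⁆)⁻¹)⁻¹) := by
          rw [map_mul, map_inv, map_mul, map_mul, map_inv]
      _ = q ⁅d, ιφ ⁅z, g⁆⁆ := by rw [← comm_eq_mul_inv_conj]
      _ = q ⁅d, ι ⁅z, g⁆⁆ := by rw [commD_iotaR_eq_iotaL (tensor_mem_DD u g)]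
  -- Step 2: values on conjugates g • z vanish
  have sigma : ∀ z ∈ VV H (k+2), q ⁅d, ι (g * z * g⁻¹)⁆ = 1 := by
    intro z hz
    have hgz : g * z * g⁻¹ = ⁅z, g⁆⁻¹ * z := by
      simp only [commutatorElement_def]; group
    have hw'2 : ⁅z, g⁆ ∈ VV H (k+2) :=
      mem_VV_of_le H (by omega) (comm_VV_raise H (by omega) hz)
    rw [hgz, map_mul, map_inv, comm_inv_left_mul, map_mul, map_mul, map_mul, map_inv,
      map_inv]
    have h1 : q ⁅d, ι z⁆ = q ⁅d, ι ⁅z, g⁆⁆ := rel z hz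
    rw [h1]
    group
  -- Step 3: conclude by surjectivity of conjugation
  intro z hz
  have hz1 : g⁻¹ * z * g ∈ VV H (k+2) := by
    have := (VV_normal H (k+2)).conj_mem z hz g⁻¹
    simpa using this
  have := sigma (g⁻¹ * z * g) hz1
  have hzz : g * (g⁻¹ * z * g) * g⁻¹ = z := by group
  rw [hzz] at this
  exact (QuotientGroup.eq_one_iff _).mp this

include hfz in
lemma theta_frozen2 {i j : ℕ} (hi : 2 ≤ i) (hj : 2 ≤ j) {u v z : G}
    (hu : u ∈ VV H i) (hv : v ∈ VV H j) (hz : z ∈ VV H (k+2)) :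
    ⁅⁅ι u, ιφ v⁆, ι z⁆ = 1 := by
  have hzT : z ∈ (⊤ : Subgroup G).lowerCentralSeries k := VV_le_lcs_k k H le_rfl hz
  have h1 : z * u * z⁻¹ = u := freeze_conj1 k H hfz (VV_le_H H hi hu) hzT
  have h2 : z * v * z⁻¹ = v := freeze_conj1 k H hfz (VV_le_H H hj hv) hzT
  rw [comm_eq_mul_inv_conj, conjL, h1, h2]
  group

include hfz in
lemma theta_zfrozen (i j : ℕ) (hi : 1 ≤ i) (hj : 1 ≤ j) {u v z : G}
    (hu : u ∈ VV H i) (hv : v ∈ VV H j) (hz : z ∈ VV H (k+2)) :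
    ⁅⁅ι u, ιφ v⁆, ι z⁆ ∈ FF k H (min i (k+2) + min j (k+2) + 1) := by
  by_cases hi1 : i = 1
  · subst hi1
    have harr : min 1 (k+2) + min j (k+2) + 1 = min j (k+2) + 2 := by omega
    rw [harr]
    exact theta_i1 k H (by omega) u hv hz
  · have hi2 : 2 ≤ i := by omega
    by_cases hj1 : j = 1
    · subst hj1
      have harr : min i (k+2) + min 1 (k+2) + 1 = min i (k+2) + 2 := by omega
      rw [harr]
      exact theta_psi k H hfz hi2 v hu z hz
    · have hj2 : 2 ≤ j := by omega
      rw [theta_frozen2 k H hfz hi2 hj2 hu hv hz]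
      exact Subgroup.one_mem _

include hfz in
theorem theta : ∀ (t m : ℕ), 2 ≤ m → k + 2 ≤ m + t → ∀ (i j : ℕ), 1 ≤ i → 1 ≤ j →
    ∀ {u v z : G}, u ∈ VV H i → v ∈ VV H j → z ∈ VV H m →
    ⁅⁅ι u, ιφ v⁆, ι z⁆ ∈ FF k H (min i (k+2) + min j (k+2) + 1) := by
  intro t
  induction t with
  | zero =>
      intro m hm hmt i j hi hj u v z hu hv hz
      exact theta_zfrozen k H hfz i j hi hj hu hv (mem_VV_of_le H (by omega) hz)
  | succ t ih =>
      intro m hm hmt i j hi hj u v z hu hv hz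
      by_cases hfroz : k + 2 ≤ m
      · exact theta_zfrozen k H hfz i j hi hj hu hv (mem_VV_of_le H hfroz hz)
      by_cases hi1 : i = 1
      · subst hi1
        have harr : min 1 (k+2) + min j (k+2) + 1 = min j (k+2) + 2 := by omega
        rw [harr]
        exact theta_i1 k H hm u hv hz
      have hi2 : 2 ≤ i := by omega
      set F := FF k H (min i (k+2) + min j (k+2) + 1) with hFdef
      set d := ⁅ι u, ιφ v⁆ with hd
      set w := ⁅z, u⁆ with hwdef
      set w' := ⁅z, v⁆ with hw'def
      have hzH : z ∈ H := VV_le_H H hm hz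
      have hwm : w ∈ VV H (m+1) := comm_VV_raise H hm hz
      have hwi : w ∈ VV H (i+1) := comm_VV_raise' H hi2 hu
      have hw'm : w' ∈ VV H (m+1) := comm_VV_raise H hm hz
      -- pieces
      have piece1 : ⁅ι u, ιφ w'⁆ ∈ F := by
        by_cases hjk : k + 2 ≤ j
        · have : w' = 1 := freeze_comm_eq_one' k H hfz hzH (VV_le_lcs_k k H hjk hv)
          rw [this, map_one, commutatorElement_one_right]
          exact Subgroup.one_mem _
        by_cases hj1 : j = 1
        · refine FF_antitone k H ?_ (tensor_mem_FF k H (i := i) (j := m+1) hu hw'm le_rfl)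
          subst hj1; omega
        · have hj2 : 2 ≤ j := by omega
          have hw'j : w' ∈ VV H (j+1) := comm_VV_raise' H hj2 hv
          refine FF_antitone k H ?_ (tensor_mem_FF k H (i := i) (j := j+1) hu hw'j le_rfl)
          omega
      have piece3 : ⁅ι w, ιφ w'⁆ ∈ F := by
        by_cases hjk : k + 2 ≤ j
        · have : w' = 1 := freeze_comm_eq_one' k H hfz hzH (VV_le_lcs_k k H hjk hv)
          rw [this, map_one, commutatorElement_one_right]
          exact Subgroup.one_mem _
        by_cases hj1 : j = 1
        · refine FF_antitone k H ?_ (tensor_mem_FF k H (i := i+1) (j := m+1) hwi hw'm le_rfl)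
          subst hj1; omega
        · have hj2 : 2 ≤ j := by omega
          have hw'j : w' ∈ VV H (j+1) := comm_VV_raise' H hj2 hv
          refine FF_antitone k H ?_ (tensor_mem_FF k H (i := i+1) (j := j+1) hwi hw'j le_rfl)
          omega
      have piece4 : ⁅ι w, ιφ v⁆ ∈ F := by
        by_cases hik : k + 2 ≤ i
        · have : w = 1 := freeze_comm_eq_one' k H hfz hzH (VV_le_lcs_k k H hik hu)
          rw [this, map_one, commutatorElement_one_left]
          exact Subgroup.one_mem _
        · refine FF_antitone k H ?_ (tensor_mem_FF k H (i := i+1) (j := j) hwi hv le_rfl)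
          omega
      -- conjugation formula
      have hconj : ι z * d * (ι z)⁻¹ = ⁅ι (w * u), ιφ (w' * v)⁆ := by
        rw [hd, conjL]
        have h1 : z * u * z⁻¹ = w * u := by
          rw [hwdef]; simp only [commutatorElement_def]; group
        have h2 : z * v * z⁻¹ = w' * v := by
          rw [hw'def]; simp only [commutatorElement_def]; group
        rw [h1, h2]
      set P₁ : Nu G := ι w * ⁅ι u, ιφ w'⁆ * (ι w)⁻¹ with hP₁
      set P₃ : Nu G := ⁅ι w, ιφ w'⁆ with hP₃
      set P₄ : Nu G := ιφ w' * ⁅ι w, ιφ v⁆ * (ιφ w')⁻¹ with hP₄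
      set g₀ : Nu G := ι w * ιφ w' with hg₀
      have hexp : ι z * d * (ι z)⁻¹ = P₁ * (g₀ * d * g₀⁻¹) * P₃ * P₄ := by
        rw [hconj, map_mul, map_mul, exp_identity]
      have hrho : g₀ * d⁻¹ * g₀⁻¹ = ι (w * w') * d⁻¹ * (ι (w * w'))⁻¹ := by
        have h5 := conj_eq_rho g₀ ((DD G).inv_mem (tensor_mem_DD u v))
        rw [hd, h5]
        congr 2 <;> rw [hg₀, map_mul, rho_nuL, rho_nuR]
      have assemble : ⁅d, ι z⁆ =
          (d * P₄⁻¹ * d⁻¹) * (d * P₃⁻¹ * d⁻¹) * (d * (g₀ * d⁻¹ * g₀⁻¹)) * P₁⁻¹ := by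
        rw [comm_eq_mul_inv_conj d (ι z), hexp]
        group
      have hmids : d * (g₀ * d⁻¹ * g₀⁻¹) = ⁅d, ι (w * w')⁆ := by
        rw [hrho, comm_eq_mul_inv_conj]
        group
      rw [assemble, hmids]
      have hww' : w * w' ∈ VV H (m+1) := (VV H (m+1)).mul_mem hwm hw'm
      have hIH : ⁅d, ι (w * w')⁆ ∈ F :=
        ih (m+1) (by omega) (by omega) i j hi hj hu hv hww'
      have hP₁F : P₁ ∈ F := by
        rw [hP₁]
        exact Subgroup.Normal.conj_mem (FF_normal k H _) _ piece1 (ι w)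
      have hP₃F : P₃ ∈ F := piece3
      have hP₄F : P₄ ∈ F := by
        rw [hP₄]
        exact Subgroup.Normal.conj_mem (FF_normal k H _) _ piece4 (ιφ w')
      have c1 : d * P₄⁻¹ * d⁻¹ ∈ F :=
        Subgroup.Normal.conj_mem (FF_normal k H _) _ (F.inv_mem hP₄F) d
      have c2 : d * P₃⁻¹ * d⁻¹ ∈ F :=
        Subgroup.Normal.conj_mem (FF_normal k H _) _ (F.inv_mem hP₃F) d
      exact F.mul_mem (F.mul_mem (F.mul_mem c1 c2) hIH) (F.inv_mem hP₁F)

include hfz in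
/-- descent of the D-filtration under commutation with `ι h`, `h ∈ H`. -/
lemma FF_step {s : ℕ} {x : Nu G} (hx : x ∈ FF k H s) {h : G} (hh : h ∈ H) :
    ⁅x, ι h⁆ ∈ FF k H (s + 1) := by
  have hhV : h ∈ VV H 2 := by
    rw [VV, if_neg (by omega)]
    exact ⟨hh, by rw [Nat.sub_self, Subgroup.lowerCentralSeries_zero]; trivial⟩
  induction hx using Subgroup.closure_induction with
  | mem y hy =>
      obtain ⟨i, j, u, v, hu, hv, hsum, rfl⟩ := hy
      have hu' : u ∈ VV H (max 1 i) := by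
        rcases Nat.eq_zero_or_pos i with h0 | h1
        · subst h0
          simp only [Nat.max_eq_left (by omega : 1 ≥ 0)]
          rw [VV_one]; trivial
        · rwa [Nat.max_eq_right h1]
      have hv' : v ∈ VV H (max 1 j) := by
        rcases Nat.eq_zero_or_pos j with h0 | h1
        · subst h0
          simp only [Nat.max_eq_left (by omega : 1 ≥ 0)]
          rw [VV_one]; trivial
        · rwa [Nat.max_eq_right h1]
      have := theta k H hfz (k+2) 2 (by omega) (by omega) (max 1 i) (max 1 j)
        (le_max_left _ _) (le_max_left _ _) hu' hv' hhV
      refine FF_antitone k H ?_ this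
      have l1 : min i (k+2) ≤ min (max 1 i) (k+2) := by omega
      have l2 : min j (k+2) ≤ min (max 1 j) (k+2) := by omega
      omega
  | one => simpa [commutatorElement_one_left] using Subgroup.one_mem _
  | mul a b ha hb iha ihb =>
      have e : ⁅a * b, ι h⁆ = (a * ⁅b, ι h⁆ * a⁻¹) * ⁅a, ι h⁆ := by
        simp only [commutatorElement_def]; group
      rw [e]
      exact Subgroup.mul_mem _
        (Subgroup.Normal.conj_mem (FF_normal k H _) _ ihb a) iha
  | inv a ha iha =>
      have e : ⁅a⁻¹, ι h⁆ = a⁻¹ * ⁅a, ι h⁆⁻¹ * a := by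
        simp only [commutatorElement_def]; group
      rw [e]
      have := Subgroup.Normal.conj_mem (FF_normal k H _) _ ((FF k H (s+1)).inv_mem iha) a⁻¹
      simpa [mul_assoc] using this

include hfz in
/-- elements of the top level of the filtration are fixed by conjugation by `ι h`. -/
lemma FF_top_fixed {x : Nu G} (hx : x ∈ FF k H (2*k + 4)) {h : G} (hh : h ∈ H) :
    ι h * x * (ι h)⁻¹ = x := by
  induction hx using Subgroup.closure_induction with
  | mem y hy =>
      obtain ⟨i, j, u, v, hu, hv, hsum, rfl⟩ := hy
      have hik : k + 2 ≤ i := by omega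
      have hjk : k + 2 ≤ j := by omega
      rw [conjL]
      have h1 : h * u * h⁻¹ = u := freeze_conj2 k H hfz hh (VV_le_lcs_k k H hik hu)
      have h2 : h * v * h⁻¹ = v := freeze_conj2 k H hfz hh (VV_le_lcs_k k H hjk hv)
      rw [h1, h2]
  | one => simp
  | mul a b _ _ iha ihb =>
      have e : ι h * (a * b) * (ι h)⁻¹ = (ι h * a * (ι h)⁻¹) * (ι h * b * (ι h)⁻¹) := by group
      rw [e, iha, ihb]
  | inv a _ iha =>
      have e : ι h * a⁻¹ * (ι h)⁻¹ = (ι h * a * (ι h)⁻¹)⁻¹ := by group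
      rw [e, iha]

include hfz in
lemma FF_top_step {x : Nu G} (hx : x ∈ FF k H (2*k + 4)) {h : G} (hh : h ∈ H) :
    ⁅x, ι h⁆ = 1 := by
  rw [comm_eq_mul_inv_conj, FF_top_fixed k H hfz hx hh]
  group

end Psi

/-- commutator with arbitrary element reduces to the ι-image of its ρ-value. -/
lemma commD_eq_rho {x : Nu G} (hx : x ∈ DD G) (n : Nu G) :
    ⁅x, n⁆ = ⁅x, ι (rho n)⁆ := by
  rw [comm_eq_mul_inv_conj, comm_eq_mul_inv_conj, conj_eq_rho n hx]

end Claims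

section NPart

variable (k : ℕ) (H : Subgroup G) [H.Normal]

/-- the homomorphism whose kernel is N -/
def fN : Nu G →* (G ⧸ H) × ((G × G) ⧸ (H.prod H)) :=
  ((QuotientGroup.mk' H).comp rho).prod ((QuotientGroup.mk' (H.prod H)).comp pi)

/-- the subgroup N -/
def NN : Subgroup (Nu G) := (fN H).ker

lemma mem_NN {x : Nu G} : x ∈ NN H ↔ rho x ∈ H ∧ pi x ∈ H.prod H := by
  rw [NN, MonoidHom.mem_ker, fN, MonoidHom.prod_apply, Prod.ext_iff]
  simp only [MonoidHom.comp_apply, Prod.fst_one, Prod.snd_one]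
  rw [QuotientGroup.mk'_apply, QuotientGroup.mk'_apply,
    QuotientGroup.eq_one_iff, QuotientGroup.eq_one_iff]

instance NN_normal : (NN H).Normal := MonoidHom.normal_ker _

/-- the γ-chain of H inside G -/
def Gam (t : ℕ) : Subgroup G := ((⊤ : Subgroup H).lowerCentralSeries t).map H.subtype

lemma Gam_zero : Gam H 0 = H := by
  rw [Gam, Subgroup.lowerCentralSeries_zero, ← MonoidHom.range_eq_map, Subgroup.subtype_range]

omit [H.Normal] in
lemma Gam_le_H (t : ℕ) : Gam H t ≤ H := Subgroup.map_subtype_le _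

omit [H.Normal] in
lemma Gam_le_lcs (t : ℕ) : Gam H t ≤ (⊤ : Subgroup G).lowerCentralSeries t :=
  Subgroup.lowerCentralSeries_map_subtype_le H t

omit [H.Normal] in
lemma Gam_succ (t : ℕ) : Gam H (t+1) = ⁅Gam H t, H⁆ := by
  have h0 : (⊤ : Subgroup H).lowerCentralSeries (t+1) = ⁅(⊤ : Subgroup H).lowerCentralSeries t, ⊤⁆ := rfl
  rw [Gam, h0, Subgroup.map_commutator, ← Gam, ← MonoidHom.range_eq_map, Subgroup.subtype_range]

omit [H.Normal] in
lemma Gam_comm {t : ℕ} {a b : G} (ha : a ∈ Gam H t) (hb : b ∈ H) : ⁅a, b⁆ ∈ Gam H (t+1) := by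
  rw [Gam_succ]
  exact Subgroup.commutator_mem_commutator ha hb

section WithFz

variable (hfz : ∀ h ∈ H, ∀ t ∈ (⊤ : Subgroup G).lowerCentralSeries k, h * t * h⁻¹ = t)

include hfz in
lemma Gam_top : Gam H (k+1) = ⊥ := by
  rw [Gam_succ, eq_bot_iff]
  refine Subgroup.commutator_le.mpr ?_
  intro a ha b hb
  rw [Subgroup.mem_bot]
  exact freeze_comm_eq_one k H hfz hb (Gam_le_lcs H k ha)

/-- the A-chain -/
def AA (t : ℕ) : Subgroup (Nu G) := NN H ⊓ Subgroup.comap pi ((Gam H t).prod (Gam H t))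

lemma NN_le_AA0 : NN H ≤ AA H 0 := by
  intro x hx
  rw [AA, Subgroup.mem_inf]
  refine ⟨hx, ?_⟩
  rw [Subgroup.mem_comap, Gam_zero]
  exact ((mem_NN H).mp hx).2

lemma AA_step {t : ℕ} {x n : Nu G} (hx : x ∈ AA H t) (hn : n ∈ NN H) :
    ⁅x, n⁆ ∈ AA H (t+1) := by
  rw [AA, Subgroup.mem_inf] at hx ⊢
  constructor
  · exact comm_mem_left hx.1 n
  · rw [Subgroup.mem_comap, map_commutatorElement]
    have hpx := Subgroup.mem_comap.mp hx.2
    have hpn := ((mem_NN H).mp hn).2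
    have he : ⁅pi x, pi n⁆ = (⁅(pi x).1, (pi n).1⁆, ⁅(pi x).2, (pi n).2⁆) := rfl
    rw [he, Subgroup.mem_prod]
    exact ⟨Gam_comm H (Subgroup.mem_prod.mp hpx).1 (Subgroup.mem_prod.mp hpn).1,
      Gam_comm H (Subgroup.mem_prod.mp hpx).2 (Subgroup.mem_prod.mp hpn).2⟩

include hfz in
lemma AA_junction {x : Nu G} (hx : x ∈ AA H (k+1)) : x ∈ FF k H 2 := by
  rw [AA, Subgroup.mem_inf] at hx
  rw [← DD_eq_FF2, ← ker_pi_eq_DD, MonoidHom.mem_ker]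
  have h2 := Subgroup.mem_comap.mp hx.2
  rw [Gam_top k H hfz] at h2
  have := Subgroup.mem_prod.mp h2
  rw [Subgroup.mem_bot] at this
  obtain ⟨e1, e2⟩ := this
  exact Prod.ext e1 e2

include hfz in
lemma FF_N_step {s : ℕ} {x n : Nu G} (hx : x ∈ FF k H s) (hn : n ∈ NN H) :
    ⁅x, n⁆ ∈ FF k H (s+1) := by
  rw [commD_eq_rho (FF_le_DD k H s hx) n]
  exact FF_step k H hfz hx ((mem_NN H).mp hn).1

include hfz in
lemma FF_N_top {x n : Nu G} (hx : x ∈ FF k H (2*k+4)) (hn : n ∈ NN H) : ⁅x, n⁆ = 1 := by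
  rw [commD_eq_rho (FF_le_DD k H _ hx) n]
  exact FF_top_step k H hfz hx ((mem_NN H).mp hn).1

/-- the full central chain of N -/
def cc (t : ℕ) : Subgroup (Nu G) :=
  if t ≤ k+1 then AA H t else if t ≤ 3*k+3 then FF k H (t - (k+1) + 2) else ⊥

lemma cc_zero : cc k H 0 = AA H 0 := by rw [cc, if_pos (by omega)]

lemma cc_top : cc k H (3*k+4) = ⊥ := by
  rw [cc, if_neg (by omega), if_neg (by omega)]

include hfz in
lemma cc_step (t : ℕ) {x n : Nu G} (hx : x ∈ cc k H t) (hn : n ∈ NN H) :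
    ⁅x, n⁆ ∈ cc k H (t+1) := by
  by_cases h1 : t + 1 ≤ k + 1
  · rw [cc, if_pos (by omega)] at hx
    rw [cc, if_pos h1]
    exact AA_step H hx hn
  by_cases h2 : t ≤ k + 1
  · -- t = k+1, junction
    rw [cc, if_pos h2] at hx
    have ht : t = k + 1 := by omega
    subst ht
    have hx2 : x ∈ FF k H 2 := AA_junction k H hfz hx
    have : cc k H (k+1+1) = FF k H 3 := by
      rw [cc, if_neg (by omega), if_pos (by omega)]
      congr 1
      omega
    rw [this]
    exact FF_N_step k H hfz hx2 hn
  by_cases h3 : t ≤ 3*k+3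
  · rw [cc, if_neg h2, if_pos h3] at hx
    by_cases h4 : t ≤ 3*k+2
    · have : cc k H (t+1) = FF k H (t - (k+1) + 2 + 1) := by
        rw [cc, if_neg (by omega), if_pos (by omega)]
        congr 1
        omega
      rw [this]
      exact FF_N_step k H hfz hx hn
    · have ht : t = 3*k+3 := by omega
      subst ht
      have hs : 3*k+3 - (k+1) + 2 = 2*k+4 := by omega
      rw [hs] at hx
      have := FF_N_top k H hfz hx hn
      rw [this]
      exact Subgroup.one_mem _
  · rw [cc, if_neg h2, if_neg h3, Subgroup.mem_bot] at hx
    subst hx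
    rw [commutatorElement_one_left]
    exact Subgroup.one_mem _

include hfz in
lemma NN_nilpotent : Group.IsNilpotent (NN H) := by
  rw [Subgroup.nilpotent_iff_lowerCentralSeries]
  refine ⟨3*k+4, ?_⟩
  have key : ∀ t, ((⊤ : Subgroup (NN H)).lowerCentralSeries t).map (NN H).subtype ≤ cc k H t := by
    intro t
    induction t with
    | zero =>
        rw [Subgroup.lowerCentralSeries_zero, ← MonoidHom.range_eq_map, Subgroup.subtype_range,
          cc_zero]
        exact NN_le_AA0 H
    | succ t ih =>
        have h0 : (⊤ : Subgroup (NN H)).lowerCentralSeries (t+1) = ⁅(⊤ : Subgroup (NN H)).lowerCentralSeries t, ⊤⁆ := rfl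
        rw [h0, Subgroup.map_commutator, ← MonoidHom.range_eq_map, Subgroup.subtype_range]
        refine Subgroup.commutator_le.mpr ?_
        intro a ha b hb
        exact cc_step k H hfz t (ih ha) hb
  have h := key (3*k+4)
  rw [cc_top] at h
  rw [eq_bot_iff]
  intro x hx
  have h2 : (NN H).subtype x ∈ (⊥ : Subgroup (Nu G)) :=
    h (Subgroup.mem_map_of_mem _ hx)
  rw [Subgroup.mem_bot] at h2 ⊢
  exact Subtype.ext h2

end WithFz

lemma NN_finiteIndex [H.FiniteIndex] : (NN H).FiniteIndex := by
  haveI : (H.prod H).FiniteIndex :=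
    ⟨by rw [Subgroup.index_prod]
        exact mul_ne_zero Subgroup.FiniteIndex.index_ne_zero Subgroup.FiniteIndex.index_ne_zero⟩
  show (fN H).ker.FiniteIndex
  infer_instance

end NPart

end NuProof

theorem nu_nilpotent_by_finite' (G : Type*) [Group G]
    (h : ∃ k : ℕ, Finite ((⊤ : Subgroup G).lowerCentralSeries k)) :
    ∃ N : Subgroup (Nu G), N.Normal ∧ Group.IsNilpotent N ∧ N.FiniteIndex := by
  classical
  obtain ⟨k, hfin⟩ := h
  haveI : Finite ((⊤ : Subgroup G).lowerCentralSeries k) := hfin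
  haveI : Finite (MulAut ((⊤ : Subgroup G).lowerCentralSeries k)) :=
    Finite.of_injective (fun e => (e : ((⊤ : Subgroup G).lowerCentralSeries k) → ((⊤ : Subgroup G).lowerCentralSeries k)))
      DFunLike.coe_injective
  set H := (MulAut.conjNormal (H := (⊤ : Subgroup G).lowerCentralSeries k) : G →* _).ker with hHdef
  haveI : H.FiniteIndex := Subgroup.finiteIndex_ker _
  have hfz : ∀ a ∈ H, ∀ t ∈ (⊤ : Subgroup G).lowerCentralSeries k, a * t * a⁻¹ = t := by
    intro a ha t ht
    have h1 : MulAut.conjNormal a = 1 := ha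
    have h2 : (MulAut.conjNormal a) (⟨t, ht⟩ : (⊤ : Subgroup G).lowerCentralSeries k) = ⟨t, ht⟩ := by
      rw [h1]; rfl
    have h3 := congrArg (Subtype.val) h2
    rwa [MulAut.conjNormal_apply] at h3
  exact ⟨NuProof.NN H, NuProof.NN_normal H, NuProof.NN_nilpotent k H hfz,
    NuProof.NN_finiteIndex H⟩

/-- Theorem A(b): if G is finite-by-nilpotent, then ν(G) is nilpotent-by-finite. -/
theorem nu_nilpotent_by_finite (G : Type*) [Group G]
    (h : ∃ k : ℕ, Finite ((⊤ : Subgroup G).lowerCentralSeries k)) :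
    ∃ N : Subgroup (Nu G), N.Normal ∧ Group.IsNilpotent N ∧ N.FiniteIndex :=
  nu_nilpotent_by_finite' G h
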